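/- (Lemma 1) The function h_0(θ, λ) := Δ_0(θ, λ) · G, where Δ_0(θ, λ) := r(s,a) + (1−a)·λ − I_0(θ) + max_{a'∈{0,1}} f_0(θ; φ(s', a')) − f_0(θ; φ(s, a)) and G ∈ (ℝ^d)^m is the vector whose r-th block is m^{−1/2} b_r · 1{⟨w_{r,0}, φ(s,a)⟩ > 0} · φ(s,a), is globally Lipschitz with constants 3 in θ and 1 in λ: for all parameters θ_1, θ_2 and reals λ_1, λ_2, ‖h_0(θ_1, λ_1) − h_0(θ_2, λ_2)‖ ≤ 3‖θ_1 − θ_2‖ + |λ_1 − λ_2|. -/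

import Mathlib

/-- Lemma 1: `h₀(θ, λ) := Δ₀(θ, λ) • G`, with
`Δ₀(θ,λ) = r(s,a) + (1−a)λ − I₀(θ) + max_{a'} f₀(θ;φ(s',a')) − f₀(θ;φ(s,a))`
and `G` the vector whose `r`-th block is `m^{−1/2} b_r 1{⟨w_{r,0},φ(s,a)⟩>0} φ(s,a)`,
is globally Lipschitz: `‖h₀(θ₁,λ₁) − h₀(θ₂,λ₂)‖ ≤ 3‖θ₁−θ₂‖ + |λ₁−λ₂|`. -/
theorem stmt_3 (m d : ℕ) (hm : 0 < m) (hd : 0 < d)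
    (b : Fin m → ℝ) (hb : ∀ r, b r = 1 ∨ b r = -1)
    (w0 : Fin m → EuclideanSpace ℝ (Fin d))
    (f0 : (PiLp 2 fun _ : Fin m => EuclideanSpace ℝ (Fin d)) →
      EuclideanSpace ℝ (Fin d) → ℝ)
    (hf0 : ∀ θ φ, f0 θ φ = (Real.sqrt m)⁻¹ *
      ∑ r, b r * (if (0 : ℝ) < inner ℝ (w0 r) φ then (inner ℝ (θ r) φ : ℝ) else 0))
    (S : Type) [Fintype S] [Nonempty S]
    (φ : S → Fin 2 → EuclideanSpace ℝ (Fin d)) (hφ : ∀ s a, ‖φ s a‖ ≤ 1)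
    (rew : S → Fin 2 → ℝ)
    (s : S) (a : Fin 2) (s' : S)
    (I0 : (PiLp 2 fun _ : Fin m => EuclideanSpace ℝ (Fin d)) → ℝ)
    (hI0 : ∀ θ, I0 θ = (1 / (2 * (Fintype.card S : ℝ))) *
      ∑ st, (f0 θ (φ st 0) + f0 θ (φ st 1)))
    (Δ0 : (PiLp 2 fun _ : Fin m => EuclideanSpace ℝ (Fin d)) → ℝ → ℝ)
    (hΔ0 : ∀ θ lam, Δ0 θ lam =
      rew s a + (1 - (a.val : ℝ)) * lam - I0 θ
        + max (f0 θ (φ s' 0)) (f0 θ (φ s' 1)) - f0 θ (φ s a))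
    (G : PiLp 2 fun _ : Fin m => EuclideanSpace ℝ (Fin d))
    (hG : ∀ r, G r =
      ((Real.sqrt m)⁻¹ * b r *
        (if (0 : ℝ) < inner ℝ (w0 r) (φ s a) then (1 : ℝ) else 0)) • φ s a)
    (h0 : (PiLp 2 fun _ : Fin m => EuclideanSpace ℝ (Fin d)) → ℝ →
      PiLp 2 fun _ : Fin m => EuclideanSpace ℝ (Fin d))
    (hh0 : ∀ θ lam, h0 θ lam = Δ0 θ lam • G)
    (θ₁ θ₂ : PiLp 2 fun _ : Fin m => EuclideanSpace ℝ (Fin d)) (lam₁ lam₂ : ℝ) :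
    ‖h0 θ₁ lam₁ - h0 θ₂ lam₂‖ ≤ 3 * ‖θ₁ - θ₂‖ + |lam₁ - lam₂| := by
  have hm' : (0:ℝ) < (m:ℝ) := by exact_mod_cast hm
  have hsm : (0:ℝ) < Real.sqrt m := Real.sqrt_pos.2 hm'
  set c : EuclideanSpace ℝ (Fin d) → Fin m → ℝ := fun ψ r =>
    (Real.sqrt m)⁻¹ * b r * (if (0 : ℝ) < inner ℝ (w0 r) ψ then (1:ℝ) else 0) with hc
  have hcabs : ∀ ψ r, |c ψ r| ≤ (Real.sqrt m)⁻¹ := by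
    intro ψ r
    have hbr : |b r| = 1 := by rcases hb r with h | h <;> simp [h]
    have hind : |(if (0 : ℝ) < inner ℝ (w0 r) ψ then (1:ℝ) else 0)| ≤ 1 := by
      split_ifs <;> simp
    calc |c ψ r| = (Real.sqrt m)⁻¹ * |b r| * |(if (0 : ℝ) < inner ℝ (w0 r) ψ then (1:ℝ) else 0)| := by
          rw [hc]; rw [abs_mul, abs_mul, abs_inv, abs_of_pos hsm]
      _ ≤ (Real.sqrt m)⁻¹ * 1 * 1 := by
          apply mul_le_mul _ hind (abs_nonneg _) (by positivity)
          rw [hbr]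
      _ = (Real.sqrt m)⁻¹ := by ring
  -- norm of block vectors with blocks c ψ r • ψ
  have hGnorm : ∀ (v : PiLp 2 fun _ : Fin m => EuclideanSpace ℝ (Fin d))
      (ψ : EuclideanSpace ℝ (Fin d)), ‖ψ‖ ≤ 1 → (∀ r, v r = c ψ r • ψ) → ‖v‖ ≤ 1 := by
    intro v ψ hψ hv
    have hsq := PiLp.norm_sq_eq_of_L2 (fun _ : Fin m => EuclideanSpace ℝ (Fin d)) v
    have hbound : ∀ r : Fin m, ‖v r‖ ^ 2 ≤ 1 / (m:ℝ) := by
      intro r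
      have h1 : ‖v r‖ = |c ψ r| * ‖ψ‖ := by rw [hv r, norm_smul, Real.norm_eq_abs]
      have h2 : |c ψ r| * ‖ψ‖ ≤ (Real.sqrt m)⁻¹ * 1 :=
        mul_le_mul (hcabs ψ r) hψ (norm_nonneg _) (by positivity)
      have h3 : ‖v r‖ ≤ (Real.sqrt m)⁻¹ := by rw [h1]; linarith
      have h4 : ((Real.sqrt m)⁻¹) ^ 2 = 1 / (m:ℝ) := by
        rw [sq, ← mul_inv, Real.mul_self_sqrt hm'.le, one_div]
      calc ‖v r‖ ^ 2 ≤ ((Real.sqrt m)⁻¹) ^ 2 := by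
            exact pow_le_pow_left₀ (norm_nonneg _) h3 2
        _ = 1 / (m:ℝ) := h4
    have hsum : ∑ r : Fin m, ‖v r‖ ^ 2 ≤ 1 := by
      calc ∑ r : Fin m, ‖v r‖ ^ 2 ≤ ∑ _r : Fin m, 1 / (m:ℝ) :=
            Finset.sum_le_sum fun r _ => hbound r
        _ = (m:ℝ) * (1 / (m:ℝ)) := by simp [Finset.sum_const, mul_comm]
        _ = 1 := by field_simp
    have hsq1 : ‖v‖ ^ 2 ≤ 1 := by rw [hsq]; exact hsum
    nlinarith [norm_nonneg v]
  -- f0 as an inner product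
  have hf_inner : ∀ (θ : PiLp 2 fun _ : Fin m => EuclideanSpace ℝ (Fin d))
      (v : PiLp 2 fun _ : Fin m => EuclideanSpace ℝ (Fin d))
      (ψ : EuclideanSpace ℝ (Fin d)), (∀ r, v r = c ψ r • ψ) →
      f0 θ ψ = inner ℝ v θ := by
    intro θ v ψ hv
    rw [hf0, PiLp.inner_apply, Finset.mul_sum]
    apply Finset.sum_congr rfl
    intro r _
    rw [hv r, real_inner_smul_left]
    simp only [hc]
    by_cases h : (0:ℝ) < inner ℝ (w0 r) ψ
    · rw [if_pos h, if_pos h, real_inner_comm]; ring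
    · rw [if_neg h, if_neg h]; ring
  -- Lipschitz bound for f0 in θ
  have hf_lip : ∀ ψ : EuclideanSpace ℝ (Fin d), ‖ψ‖ ≤ 1 →
      |f0 θ₁ ψ - f0 θ₂ ψ| ≤ ‖θ₁ - θ₂‖ := by
    intro ψ hψ
    obtain ⟨v, hv⟩ : ∃ v : PiLp 2 (fun _ : Fin m => EuclideanSpace ℝ (Fin d)),
        ∀ r, v r = c ψ r • ψ := ⟨WithLp.toLp 2 (fun r => c ψ r • ψ), fun r => rfl⟩
    rw [hf_inner θ₁ v ψ hv, hf_inner θ₂ v ψ hv, ← inner_sub_right]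
    calc |(inner ℝ v (θ₁ - θ₂) : ℝ)| ≤ ‖v‖ * ‖θ₁ - θ₂‖ := abs_real_inner_le_norm _ _
      _ ≤ 1 * ‖θ₁ - θ₂‖ := mul_le_mul_of_nonneg_right (hGnorm v ψ hψ hv) (norm_nonneg _)
      _ = ‖θ₁ - θ₂‖ := one_mul _
  set n := ‖θ₁ - θ₂‖ with hn
  have hn0 : 0 ≤ n := norm_nonneg _
  -- I0 Lipschitz
  have hI_lip : |I0 θ₁ - I0 θ₂| ≤ n := by
    rw [hI0, hI0, ← mul_sub, ← Finset.sum_sub_distrib]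
    have hN : (0:ℝ) < (Fintype.card S : ℝ) := by
      exact_mod_cast Fintype.card_pos
    have habs : |∑ st : S, (f0 θ₁ (φ st 0) + f0 θ₁ (φ st 1)
        - (f0 θ₂ (φ st 0) + f0 θ₂ (φ st 1)))| ≤ (Fintype.card S : ℝ) * (2 * n) := by
      calc |∑ st : S, (f0 θ₁ (φ st 0) + f0 θ₁ (φ st 1)
              - (f0 θ₂ (φ st 0) + f0 θ₂ (φ st 1)))|
          ≤ ∑ st : S, |f0 θ₁ (φ st 0) + f0 θ₁ (φ st 1)
              - (f0 θ₂ (φ st 0) + f0 θ₂ (φ st 1))| := Finset.abs_sum_le_sum_abs _ _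
        _ ≤ ∑ _st : S, 2 * n := by
            apply Finset.sum_le_sum
            intro st _
            have h0' := hf_lip (φ st 0) (hφ st 0)
            have h1' := hf_lip (φ st 1) (hφ st 1)
            have heq : f0 θ₁ (φ st 0) + f0 θ₁ (φ st 1) - (f0 θ₂ (φ st 0) + f0 θ₂ (φ st 1))
                = (f0 θ₁ (φ st 0) - f0 θ₂ (φ st 0)) + (f0 θ₁ (φ st 1) - f0 θ₂ (φ st 1)) := by
              ring
            rw [heq]
            calc |(f0 θ₁ (φ st 0) - f0 θ₂ (φ st 0)) + (f0 θ₁ (φ st 1) - f0 θ₂ (φ st 1))|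
                ≤ |f0 θ₁ (φ st 0) - f0 θ₂ (φ st 0)| + |f0 θ₁ (φ st 1) - f0 θ₂ (φ st 1)| :=
                  abs_add_le _ _
              _ ≤ 2 * n := by linarith
        _ = (Fintype.card S : ℝ) * (2 * n) := by
            simp [Finset.sum_const, mul_comm]
    rw [abs_mul]
    have h1 : |1 / (2 * (Fintype.card S : ℝ))| = 1 / (2 * (Fintype.card S : ℝ)) := by
      rw [abs_of_pos]; positivity
    rw [h1]
    calc 1 / (2 * (Fintype.card S : ℝ)) * |∑ st : S, (f0 θ₁ (φ st 0) + f0 θ₁ (φ st 1)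
            - (f0 θ₂ (φ st 0) + f0 θ₂ (φ st 1)))|
        ≤ 1 / (2 * (Fintype.card S : ℝ)) * ((Fintype.card S : ℝ) * (2 * n)) := by
          apply mul_le_mul_of_nonneg_left habs; positivity
      _ = n := by field_simp
  -- max Lipschitz
  have hmax_lip : |max (f0 θ₁ (φ s' 0)) (f0 θ₁ (φ s' 1))
      - max (f0 θ₂ (φ s' 0)) (f0 θ₂ (φ s' 1))| ≤ n := by
    refine le_trans (abs_max_sub_max_le_max _ _ _ _) ?_
    exact max_le (hf_lip (φ s' 0) (hφ s' 0)) (hf_lip (φ s' 1) (hφ s' 1))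
  -- the coefficient 1 - a
  have ha : 0 ≤ 1 - (a.val : ℝ) ∧ 1 - (a.val : ℝ) ≤ 1 := by
    constructor
    · have h1 : (a.val : ℝ) ≤ 1 := by
        have : a.val ≤ 1 := Nat.lt_succ_iff.mp a.isLt
        exact_mod_cast this
      linarith
    · have : (0:ℝ) ≤ (a.val : ℝ) := Nat.cast_nonneg _
      linarith
  -- Δ0 bound
  have hΔ : |Δ0 θ₁ lam₁ - Δ0 θ₂ lam₂| ≤ 3 * n + |lam₁ - lam₂| := by
    rw [hΔ0, hΔ0]
    have key : rew s a + (1 - (a.val : ℝ)) * lam₁ - I0 θ₁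
        + max (f0 θ₁ (φ s' 0)) (f0 θ₁ (φ s' 1)) - f0 θ₁ (φ s a)
        - (rew s a + (1 - (a.val : ℝ)) * lam₂ - I0 θ₂
        + max (f0 θ₂ (φ s' 0)) (f0 θ₂ (φ s' 1)) - f0 θ₂ (φ s a))
        = (1 - (a.val : ℝ)) * (lam₁ - lam₂) - (I0 θ₁ - I0 θ₂)
        + (max (f0 θ₁ (φ s' 0)) (f0 θ₁ (φ s' 1)) - max (f0 θ₂ (φ s' 0)) (f0 θ₂ (φ s' 1)))
        - (f0 θ₁ (φ s a) - f0 θ₂ (φ s a)) := by ring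
    rw [key]
    have hfa := hf_lip (φ s a) (hφ s a)
    have hlam : |(1 - (a.val : ℝ)) * (lam₁ - lam₂)| ≤ |lam₁ - lam₂| := by
      rw [abs_mul, abs_of_nonneg ha.1]
      exact mul_le_of_le_one_left (abs_nonneg _) ha.2
    have h1 := abs_sub (((1 - (a.val : ℝ)) * (lam₁ - lam₂) - (I0 θ₁ - I0 θ₂))
      + (max (f0 θ₁ (φ s' 0)) (f0 θ₁ (φ s' 1)) - max (f0 θ₂ (φ s' 0)) (f0 θ₂ (φ s' 1))))
      (f0 θ₁ (φ s a) - f0 θ₂ (φ s a))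
    have h2 := abs_add_le ((1 - (a.val : ℝ)) * (lam₁ - lam₂) - (I0 θ₁ - I0 θ₂))
      (max (f0 θ₁ (φ s' 0)) (f0 θ₁ (φ s' 1)) - max (f0 θ₂ (φ s' 0)) (f0 θ₂ (φ s' 1)))
    have h3 := abs_sub ((1 - (a.val : ℝ)) * (lam₁ - lam₂)) (I0 θ₁ - I0 θ₂)
    linarith
  -- G norm
  have hGn : ‖G‖ ≤ 1 := by
    apply hGnorm G (φ s a) (hφ s a)
    intro r
    rw [hG, hc]
  -- conclude
  rw [hh0, hh0, ← sub_smul, norm_smul, Real.norm_eq_abs]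
  calc |Δ0 θ₁ lam₁ - Δ0 θ₂ lam₂| * ‖G‖ ≤ (3 * n + |lam₁ - lam₂|) * 1 := by
        apply mul_le_mul hΔ hGn (norm_nonneg _)
        positivity
    _ = 3 * ‖θ₁ - θ₂‖ + |lam₁ - lam₂| := by rw [mul_one, hn]
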